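/- Let p₁/q₁, p₂/q₂ ∈ K be fractions in lowest terms over a principal ideal domain O_K (the ring of integers of an imaginary quadratic field of class number one), and let n ⊲ O_K be an ideal. If there exists γ = (a b; c d) with c ∈ n, ad − bc = 1, a,b,c,d ∈ O_K, and γ(p₁/q₁) = p₂/q₂ (Möbius action), then there exists a unit u ∈ O_K^* such that s₁q₂ ≡ u²s₂q₁ mod ((q₁q₂) + n), where s_k is an inverse of p_k modulo (q_k). -/

import Mathlib

/-- Γ₀(n)-equivalence of cusps over a principal ideal domain
(the ring of integers of an imaginary quadratic field of class number one). -/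
theorem stmt19 (R : Type*) [CommRing R] [IsDomain R] [IsPrincipalIdealRing R]
    (n : Ideal R) (p₁ q₁ p₂ q₂ s₁ s₂ : R)
    (hq₁ : q₁ ≠ 0) (hq₂ : q₂ ≠ 0)
    (hcop₁ : IsCoprime p₁ q₁) (hcop₂ : IsCoprime p₂ q₂)
    (hs₁ : p₁ * s₁ - 1 ∈ Ideal.span {q₁}) (hs₂ : p₂ * s₂ - 1 ∈ Ideal.span {q₂})
    (a b c d : R) (hcn : c ∈ n) (hdet : a * d - b * c = 1)
    (hden : algebraMap R (FractionRing R) c *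
        (algebraMap R (FractionRing R) p₁ / algebraMap R (FractionRing R) q₁) +
        algebraMap R (FractionRing R) d ≠ 0)
    (hact : (algebraMap R (FractionRing R) a *
        (algebraMap R (FractionRing R) p₁ / algebraMap R (FractionRing R) q₁) +
        algebraMap R (FractionRing R) b) /
      (algebraMap R (FractionRing R) c *
        (algebraMap R (FractionRing R) p₁ / algebraMap R (FractionRing R) q₁) +
        algebraMap R (FractionRing R) d) =
      algebraMap R (FractionRing R) p₂ / algebraMap R (FractionRing R) q₂) :
    ∃ u : Rˣ, s₁ * q₂ - (u : R)^2 * s₂ * q₁ ∈ Ideal.span {q₁ * q₂} ⊔ n := by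
  set f := algebraMap R (FractionRing R) with hf
  have hinj : Function.Injective f := IsFractionRing.injective R (FractionRing R)
  have hq₁' : f q₁ ≠ 0 := fun h => hq₁ (hinj (by rw [h, map_zero]))
  have hq₂' : f q₂ ≠ 0 := fun h => hq₂ (hinj (by rw [h, map_zero]))
  -- the transformed denominator as an element of R
  have hdenC : f (c * p₁ + d * q₁) = (f c * (f p₁ / f q₁) + f d) * f q₁ := by
    field_simp
    rw [map_add, map_mul, map_mul]; ring
  have hCne' : f (c * p₁ + d * q₁) ≠ 0 := by
    rw [hdenC]; exact mul_ne_zero hden hq₁'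
  have hCne : c * p₁ + d * q₁ ≠ 0 := fun h => hCne' (by rw [h, map_zero])
  have hnumA : f (a * p₁ + b * q₁) = (f a * (f p₁ / f q₁) + f b) * f q₁ := by
    field_simp
    rw [map_add, map_mul, map_mul]; ring
  -- cross multiplication
  have hcross : (a * p₁ + b * q₁) * q₂ = p₂ * (c * p₁ + d * q₁) := by
    apply hinj
    rw [map_mul, map_mul, hnumA, hdenC]
    have h1 : f a * (f p₁ / f q₁) + f b =
        (f p₂ / f q₂) * (f c * (f p₁ / f q₁) + f d) := by
      rw [← hact, div_mul_cancel₀ _ hden]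
    rw [h1]
    field_simp
  -- coprimality of the image pair
  obtain ⟨x, y, hxy⟩ := hcop₁
  have hcopAC : IsCoprime (a * p₁ + b * q₁) (c * p₁ + d * q₁) :=
    ⟨x * d - y * c, y * a - x * b, by linear_combination (a * d - b * c) * hxy + hdet⟩
  -- mutual divisibility gives an associated unit
  have hd1 : (a * p₁ + b * q₁) ∣ p₂ :=
    hcopAC.dvd_of_dvd_mul_right ⟨q₂, hcross.symm⟩
  have hd2 : p₂ ∣ (a * p₁ + b * q₁) :=
    hcop₂.dvd_of_dvd_mul_right ⟨c * p₁ + d * q₁, hcross⟩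
  have hd3 : (c * p₁ + d * q₁) ∣ q₂ :=
    hcopAC.symm.dvd_of_dvd_mul_right ⟨p₂, by linear_combination hcross⟩
  have hd4 : q₂ ∣ (c * p₁ + d * q₁) :=
    hcop₂.symm.dvd_of_dvd_mul_right ⟨a * p₁ + b * q₁, by linear_combination - hcross⟩
  obtain ⟨v, hv⟩ := associated_of_dvd_dvd hd2 hd1
  obtain ⟨w, hw⟩ := associated_of_dvd_dvd hd4 hd3
  have hkey : ∃ u : Rˣ, a * p₁ + b * q₁ = p₂ * (u : R) ∧ c * p₁ + d * q₁ = q₂ * (u : R) := by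
    by_cases hp₂ : p₂ = 0
    · exact ⟨w, by rw [hp₂] at hv ⊢; simpa using hv.symm, hw.symm⟩
    · refine ⟨v, hv.symm, ?_⟩
      have : p₂ * ((c * p₁ + d * q₁)) = p₂ * (q₂ * (v : R)) := by
        rw [← hcross, ← hv]; ring
      exact mul_left_cancel₀ hp₂ this
  obtain ⟨v, hv1, hv2⟩ := hkey
  obtain ⟨t₁, ht₁⟩ := Ideal.mem_span_singleton'.mp hs₁
  obtain ⟨t₂, ht₂⟩ := Ideal.mem_span_singleton'.mp hs₂
  have ht₁' : p₁ * s₁ - 1 = q₁ * t₁ := by rw [← ht₁]; ring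
  have ht₂' : p₂ * s₂ - 1 = q₂ * t₂ := by rw [← ht₂]; ring
  refine ⟨v⁻¹, ?_⟩
  set vv : R := (v : R) with hvv
  set vi : R := ((v⁻¹ : Rˣ) : R) with hvi
  have h3 : vv * vi = 1 := by
    rw [hvv, hvi, ← Units.val_mul, mul_inv_cancel, Units.val_one]
  have hident : s₁ * q₂ - vi ^ 2 * s₂ * q₁ =
      q₁ * q₂ * (vi * (s₂ * (a * t₁ + b * s₁) - s₁ * t₂ * d)) +
      c * (vi * (s₂ * p₂ - s₁ * t₂ * q₂ * p₁)) := by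
    linear_combination (vi * vi * s₂ * c - q₂ * s₂ * vi * s₁) * hv1 +
      (vi * s₁ * t₂ * q₂ - vi * vi * s₂ * a) * hv2 +
      (s₁ * t₂ * q₂ * q₂ - vi * s₂ * (a * q₂ - c * p₂) - q₂ * s₂ * s₁ * p₂) * h3 +
      (q₂ * s₂ * vi * a) * ht₁' + (-(q₂ * s₁)) * ht₂' + (vi * vi * s₂ * q₁) * hdet
  rw [hident]
  exact Ideal.add_mem _
    (Ideal.mem_sup_left (Ideal.mem_span_singleton'.mpr
      ⟨vi * (s₂ * (a * t₁ + b * s₁) - s₁ * t₂ * d), by ring⟩))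
    (Ideal.mem_sup_right (Ideal.mul_mem_right _ n hcn))
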